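/- arXiv:0708.2572 — 6 statements merged into one kernel-verified Lean document; each statement's English description precedes it below -/
import Mathlib

section
/- If a positive sequence a_1, a_2, ..., a_n satisfies the ratio monotone property (i.e., a_1/a_n < a_2/a_{n-1} < ... and a_n/a_2 < a_{n-1}/a_3 < ...), then it is log-concave: a_i/a_{i+1} is strictly increasing in i, i.e., a_{i-1} a_{i+1} < a_i^2 for all 1 < i < n. -/
theorem stmt_3 (n : ℕ) (a : ℕ → ℝ)
    (hpos : ∀ i, 1 ≤ i → i ≤ n → 0 < a i)
    (h1 : ∀ i, 2 ≤ i → i ≤ n - 1 → a (i - 1) / a (n + 2 - i) < a i / a (n + 1 - i))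
    (h2 : ∀ i, 2 ≤ i → i ≤ n - 1 → a (n + 2 - i) / a i < a (n + 1 - i) / a (i + 1)) :
    ∀ i, 1 < i → i < n → a (i - 1) * a (i + 1) < a i ^ 2 := by
  intro i hi1 hi2
  have h2i : 2 ≤ i := hi1
  have hin : i ≤ n - 1 := by omega
  have p1 : 0 < a (i - 1) := hpos _ (by omega) (by omega)
  have p2 : 0 < a i := hpos _ (by omega) (by omega)
  have p3 : 0 < a (i + 1) := hpos _ (by omega) (by omega)
  have p4 : 0 < a (n + 1 - i) := hpos _ (by omega) (by omega)
  have p5 : 0 < a (n + 2 - i) := hpos _ (by omega) (by omega)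
  have H1 := h1 i h2i hin
  have H2 := h2 i h2i hin
  rw [div_lt_div_iff₀ p5 p4] at H1
  rw [div_lt_div_iff₀ p2 p3] at H2
  nlinarith [mul_pos p4 p5, mul_pos p1 p3, mul_pos p2 p2]
end

section
/- For n ≥ 2, the degree of the polynomial d_n(q) equals binom(n,2) if n is even, and binom(n,2) - 1 if n is odd. -/
open Polynomial

/-- The q-derangement polynomial, defined by the recursion
`d_n(q) = (1+q+⋯+q^{n-1}) d_{n-1}(q) + (-1)^n q^{C(n,2)}` for `n ≥ 2`, with `d_1(q) = 0`. -/
noncomputable def dq : ℕ → Polynomial ℤ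
  | 0 => 0
  | 1 => 0
  | (n + 2) =>
      (∑ i ∈ Finset.range (n + 2), X ^ i) * dq (n + 1)
        + (-1) ^ (n + 2) * X ^ ((n + 2).choose 2)

/-- `A n k` is the coefficient of `q^k` in `d_n(q)`. -/
noncomputable def A (n k : ℕ) : ℤ := (dq n).coeff k

lemma coeff_S_mul (m k : ℕ) (p : Polynomial ℤ) :
    ((∑ i ∈ Finset.range m, (X : Polynomial ℤ) ^ i) * p).coeff k
      = ∑ i ∈ Finset.range m, if i ≤ k then p.coeff (k - i) else 0 := by
  rw [Finset.sum_mul, Polynomial.finset_sum_coeff]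
  refine Finset.sum_congr rfl fun i _ => ?_
  rw [mul_comm, Polynomial.coeff_mul_X_pow']

/-- degree target -/
def Dg (n : ℕ) : ℕ := if Even n then n.choose 2 else n.choose 2 - 1

lemma key : ∀ n : ℕ, (∀ k, 0 ≤ (dq (n+2)).coeff k) ∧
    (if Even (n+2) then (dq (n+2)).coeff ((n+2).choose 2) = 1
      else 1 ≤ (dq (n+2)).coeff ((n+2).choose 2 - 1)) ∧
    (∀ k, Dg (n+2) < k → (dq (n+2)).coeff k = 0) := by
  intro n
  induction n with
  | zero =>
    have h2 : dq 2 = X := by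
      show (∑ i ∈ Finset.range 2, (X : Polynomial ℤ) ^ i) * dq 1
          + (-1) ^ 2 * X ^ (Nat.choose 2 2) = X
      norm_num [dq, Finset.sum_range_succ]
    refine ⟨?_, ?_, ?_⟩
    · intro k
      rw [h2, Polynomial.coeff_X]
      split <;> norm_num
    · norm_num [h2]
    · intro k hk
      simp only [Dg] at hk
      norm_num at hk
      rw [h2, Polynomial.coeff_X, if_neg (by omega)]
  | succ n ih =>
    obtain ⟨ha, hb, hc⟩ := ih
    set p := dq (n+2) with hp
    set C := (n+2).choose 2 with hCdef
    have hC1 : 1 ≤ C := Nat.choose_pos (by omega)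
    have hch : (n+3).choose 2 = C + (n+2) := by
      have h : (n + 3).choose 2 = (n+2).choose 1 + (n+2).choose 2 :=
        Nat.choose_succ_succ _ _
      rw [Nat.choose_one_right] at h
      rw [hCdef]
      omega
    have hrec : dq (n+3)
        = (∑ i ∈ Finset.range (n+3), (X : Polynomial ℤ) ^ i) * p
          + (-1) ^ (n+3) * X ^ ((n+3).choose 2) := rfl
    have hCpow : ((-1 : Polynomial ℤ)) ^ (n+3) = Polynomial.C ((-1 : ℤ) ^ (n+3)) := by
      simp
    have hcoeff : ∀ k, (dq (n+3)).coeff k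
        = (∑ i ∈ Finset.range (n+3), if i ≤ k then p.coeff (k - i) else 0)
          + (-1 : ℤ) ^ (n+3) * (if k = C + (n+2) then 1 else 0) := by
      intro k
      rw [hrec, Polynomial.coeff_add, coeff_S_mul, hch, hCpow,
        Polynomial.coeff_C_mul, Polynomial.coeff_X_pow]
    by_cases he : Even (n+2)
    · -- previous even, current odd
      rw [if_pos he] at hb
      have hDg : Dg (n+2) = C := by simp [Dg, he, hCdef]
      have ho3 : ¬ Even (n+3) := by simp [Nat.even_add_one, he]
      have hneg : ((-1 : ℤ)) ^ (n+3) = -1 :=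
        Odd.neg_one_pow (Nat.not_even_iff_odd.mp ho3)
      refine ⟨?_, ?_, ?_⟩
      · -- nonnegativity
        intro k
        rw [hcoeff k, hneg]
        have hsum0 : 0 ≤ ∑ i ∈ Finset.range (n+3), if i ≤ k then p.coeff (k-i) else 0 := by
          refine Finset.sum_nonneg fun i _ => ?_
          split
          exacts [ha _, le_refl _]
        by_cases hk : k = C + (n+2)
        · rw [if_pos hk]
          have hone : (1 : ℤ) ≤ ∑ i ∈ Finset.range (n+3), if i ≤ k then p.coeff (k-i) else 0 := by
            have hmem : (n+2) ∈ Finset.range (n+3) := Finset.self_mem_range_succ _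
            have hval : (if (n+2) ≤ k then p.coeff (k-(n+2)) else 0) = 1 := by
              rw [if_pos (by omega), show k - (n+2) = C by omega, hb]
            calc (1:ℤ) = _ := hval.symm
              _ ≤ _ := Finset.single_le_sum (f := fun i => if i ≤ k then p.coeff (k-i) else 0)
                  (fun i _ => by split; exacts [ha _, le_refl _]) hmem
          linarith
        · rw [if_neg hk]
          linarith
      · -- leading coefficient
        rw [if_neg ho3, hcoeff, hneg, hch]
        set k := C + (n+2) - 1 with hk
        rw [if_neg (by omega)]
        have hone : (1 : ℤ) ≤ ∑ i ∈ Finset.range (n+3), if i ≤ k then p.coeff (k-i) else 0 := by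
          have hmem : (n+1) ∈ Finset.range (n+3) := Finset.mem_range.mpr (by omega)
          have hval : (if (n+1) ≤ k then p.coeff (k-(n+1)) else 0) = 1 := by
            rw [if_pos (by omega), show k - (n+1) = C by omega, hb]
          calc (1:ℤ) = _ := hval.symm
            _ ≤ _ := Finset.single_le_sum (f := fun i => if i ≤ k then p.coeff (k-i) else 0)
                (fun i _ => by split; exacts [ha _, le_refl _]) hmem
        linarith
      · -- degree bound
        intro k hk
        have hDg3 : Dg (n+3) = C + (n+2) - 1 := by
          simp [Dg, ho3, hch]
        rw [hDg3] at hk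
        rw [hcoeff k, hneg]
        by_cases hke : k = C + (n+2)
        · rw [if_pos hke]
          have hsum : (∑ i ∈ Finset.range (n+3), if i ≤ k then p.coeff (k-i) else 0) = 1 := by
            rw [Finset.sum_eq_single_of_mem (n+2) (Finset.self_mem_range_succ _)]
            · rw [if_pos (by omega), show k - (n+2) = C by omega, hb]
            · intro i hi hne
              rw [Finset.mem_range] at hi
              rw [if_pos (by omega)]
              exact hc _ (by rw [hDg]; omega)
          rw [hsum]; ring
        · rw [if_neg hke]
          have hsum : (∑ i ∈ Finset.range (n+3), if i ≤ k then p.coeff (k-i) else 0) = 0 := by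
            refine Finset.sum_eq_zero fun i hi => ?_
            rw [Finset.mem_range] at hi
            split
            exacts [hc _ (by rw [hDg]; omega), rfl]
          rw [hsum]; ring
    · -- previous odd, current even
      rw [if_neg he] at hb
      have hDg : Dg (n+2) = C - 1 := by simp [Dg, he, hCdef]
      have he3 : Even (n+3) := Nat.even_add_one.mpr he
      have hneg : ((-1 : ℤ)) ^ (n+3) = 1 := Even.neg_one_pow he3
      have hzero : ∀ k, C + (n+2) ≤ k →
          (∑ i ∈ Finset.range (n+3), if i ≤ k then p.coeff (k-i) else 0) = 0 := by
        intro k hkk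
        refine Finset.sum_eq_zero fun i hi => ?_
        rw [Finset.mem_range] at hi
        split
        exacts [hc _ (by rw [hDg]; omega), rfl]
      refine ⟨?_, ?_, ?_⟩
      · intro k
        rw [hcoeff k, hneg, one_mul]
        have hsum0 : 0 ≤ ∑ i ∈ Finset.range (n+3), if i ≤ k then p.coeff (k-i) else 0 := by
          refine Finset.sum_nonneg fun i _ => ?_
          split
          exacts [ha _, le_refl _]
        split <;> linarith
      · rw [if_pos he3, hcoeff, hneg, hch, hzero _ (le_refl _), if_pos rfl]
        ring
      · intro k hk
        have hDg3 : Dg (n+3) = C + (n+2) := by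
          simp [Dg, he3, hch]
        rw [hDg3] at hk
        rw [hcoeff k, hneg, hzero _ (by omega), if_neg (by omega)]
        ring

theorem stmt_5 (n : ℕ) (hn : 2 ≤ n) :
    (dq n).natDegree = if Even n then n.choose 2 else n.choose 2 - 1 := by
  obtain ⟨m, rfl⟩ : ∃ m, n = m + 2 := ⟨n - 2, by omega⟩
  obtain ⟨ha, hb, hc⟩ := key m
  by_cases he : Even (m+2)
  · rw [if_pos he]
    rw [if_pos he] at hb
    have hDg : Dg (m+2) = (m+2).choose 2 := by simp [Dg, he]
    refine le_antisymm ?_ (Polynomial.le_natDegree_of_ne_zero (by rw [hb]; norm_num))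
    rw [Polynomial.natDegree_le_iff_coeff_eq_zero]
    intro k hk
    exact hc k (by omega)
  · rw [if_neg he]
    rw [if_neg he] at hb
    have hDg : Dg (m+2) = (m+2).choose 2 - 1 := by simp [Dg, he]
    refine le_antisymm ?_ (Polynomial.le_natDegree_of_ne_zero (by intro h; rw [h] at hb; omega))
    rw [Polynomial.natDegree_le_iff_coeff_eq_zero]
    intro k hk
    exact hc k (by omega)
end

section
/- For even m ≥ 6, the coefficient of q^3 in d_m(q) equals m(m-3)/2. -/
open Polynomial

lemma dq_succ (n : ℕ) (hn : 1 ≤ n) :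
    dq (n + 1) = (∑ i ∈ Finset.range (n + 1), X ^ i) * dq n
      + (-1) ^ (n + 1) * X ^ ((n + 1).choose 2) := by
  obtain ⟨m, rfl⟩ : ∃ m, n = m + 1 := ⟨n - 1, by omega⟩
  rfl

lemma coeff_step (n k : ℕ) (hn : 3 ≤ n) (hk : k ≤ 3) :
    A (n + 1) k = ∑ i ∈ Finset.range (k + 1), A n (k - i) := by
  have hc : ¬ k = (n + 1).choose 2 := by
    have : 6 ≤ (n + 1).choose 2 := by
      calc 6 = Nat.choose 4 2 := by decide
        _ ≤ (n + 1).choose 2 := Nat.choose_le_choose 2 (by omega)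
    omega
  rw [A, dq_succ n (by omega)]
  rw [coeff_add, Finset.sum_mul, Polynomial.finset_sum_coeff]
  have h2 : ((-1 : Polynomial ℤ) ^ (n + 1) * X ^ ((n + 1).choose 2)).coeff k = 0 := by
    rw [show (-1 : Polynomial ℤ) = C (-1) by simp, ← C_pow, coeff_C_mul, coeff_X_pow,
      if_neg hc, mul_zero]
  rw [h2, add_zero]
  have h3 : ∀ i, (X ^ i * dq n).coeff k = if i ≤ k then (dq n).coeff (k - i) else 0 := by
    intro i
    rw [mul_comm, coeff_mul_X_pow']
  simp only [h3]
  rw [Finset.sum_ite, Finset.sum_const_zero, add_zero]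
  have hf : Finset.filter (fun i => i ≤ k) (Finset.range (n + 1)) = Finset.range (k + 1) := by
    ext x
    simp only [Finset.mem_filter, Finset.mem_range]
    omega
  rw [hf]
  rfl

lemma dq3 : dq 3 = X + X ^ 2 := by
  show (∑ i ∈ Finset.range 3, X ^ i) * ((∑ i ∈ Finset.range 2, X ^ i) * dq 1
      + (-1) ^ 2 * X ^ (Nat.choose 2 2)) + (-1) ^ 3 * X ^ (Nat.choose 3 2) = _
  show (∑ i ∈ Finset.range 3, X ^ i) * ((∑ i ∈ Finset.range 2, X ^ i) * 0
      + (-1) ^ 2 * X ^ (Nat.choose 2 2)) + (-1) ^ 3 * X ^ (Nat.choose 3 2) = _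
  simp [Finset.sum_range_succ]
  ring

lemma main (n : ℕ) (hn : 3 ≤ n) :
    A n 0 = 0 ∧ A n 1 = 1 ∧ A n 2 = (n : ℤ) - 2 ∧ 2 * A n 3 = (n : ℤ) * ((n : ℤ) - 3) := by
  induction n with
  | zero => omega
  | succ n ih =>
    rcases Nat.lt_or_ge n 3 with h | h
    · interval_cases n
      · omega
      · omega
      · refine ⟨?_, ?_, ?_, ?_⟩ <;>
          simp [A, dq3, coeff_X, coeff_X_pow] <;> norm_num
    · obtain ⟨h0, h1, h2, h3⟩ := ih h
      refine ⟨?_, ?_, ?_, ?_⟩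
      · rw [coeff_step n 0 h (by omega)]
        simp [Finset.sum_range_succ, h0]
      · rw [coeff_step n 1 h (by omega)]
        simp [Finset.sum_range_succ, h0, h1]
      · rw [coeff_step n 2 h (by omega)]
        simp only [Finset.sum_range_succ, Finset.sum_range_zero]
        norm_num [h0, h1, h2]
        push_cast
        ring
      · rw [coeff_step n 3 h (by omega), mul_comm]
        simp only [Finset.sum_range_succ, Finset.sum_range_zero]
        norm_num [h0, h1, h2]
        push_cast
        linarith [h3]

theorem stmt_8 (m : ℕ) (hm : 6 ≤ m) (he : Even m) :
    (A m 3 : ℚ) = (m : ℚ) * ((m : ℚ) - 3) / 2 := by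
  have h := (main m (by omega)).2.2.2
  have : (2 : ℚ) * (A m 3 : ℚ) = (m : ℚ) * ((m : ℚ) - 3) := by exact_mod_cast congrArg (Int.cast : ℤ → ℚ) h
  linarith
end

section
/- For even m ≥ 6, the coefficient of q^4 in d_m(q) equals (m-2)(m+2)(m-3)/6. -/
open Polynomial

lemma coeff_geom_mul (p : Polynomial ℤ) (N k : ℕ) (h : k < N) :
    ((∑ i ∈ Finset.range N, X ^ i) * p).coeff k
      = ∑ i ∈ Finset.range (k + 1), p.coeff i := by
  rw [Finset.sum_mul, finset_sum_coeff]
  have e : ∀ i ∈ Finset.range N, ((X:ℤ[X]) ^ i * p).coeff k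
      = if i ≤ k then p.coeff (k - i) else 0 := by
    intro i _
    rw [mul_comm, Polynomial.coeff_mul_X_pow']
  rw [Finset.sum_congr rfl e, ← Finset.sum_subset (Finset.range_subset_range.mpr h)
    (by intro i _ hi; rw [if_neg]; simpa using hi)]
  rw [Finset.sum_congr rfl (fun i hi => if_pos (by simpa [Nat.lt_succ_iff] using hi))]
  exact Finset.sum_range_reflect (fun i => p.coeff i) (k+1) ▸ rfl

lemma step (n k : ℕ) (hk : k < n + 2) (hC : (n + 2).choose 2 ≠ k) :
    A (n + 2) k = ∑ i ∈ Finset.range (k + 1), A (n + 1) i := by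
  show (dq (n+2)).coeff k = _
  rw [dq, coeff_add, coeff_geom_mul _ _ _ hk,
    show ((-1:ℤ[X])^(n+2)) = C ((-1)^(n+2)) by simp,
    coeff_C_mul, coeff_X_pow, if_neg (Ne.symm hC), mul_zero, add_zero]
  rfl

lemma step' (n k : ℕ) (h2 : 2 ≤ n) (hk : k < n) (hC : n.choose 2 ≠ k) :
    A n k = ∑ i ∈ Finset.range (k + 1), A (n - 1) i := by
  obtain ⟨m, rfl⟩ : ∃ m, n = m + 2 := ⟨n - 2, by omega⟩
  simpa using step m k hk hC

lemma chooseG (n r : ℕ) (h : r ≤ n) : r.choose 2 ≤ n.choose 2 :=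
  Nat.choose_le_choose 2 h

lemma A0 (n : ℕ) : A n 0 = 0 := by
  induction n using Nat.strong_induction_on with
  | _ n ih =>
    match n with
    | 0 => simp [A, dq]
    | 1 => simp [A, dq]
    | (m+2) =>
      rw [step m 0 (by omega) (Nat.choose_pos (by omega)).ne']
      simpa using ih (m+1) (by omega)

lemma A1 (n : ℕ) (h : 2 ≤ n) : A n 1 = 1 := by
  induction n, h using Nat.le_induction with
  | base =>
    show (dq 2).coeff 1 = 1
    rw [show (2:ℕ) = 0+2 from rfl, dq]
    simp [dq]
  | succ n hn ih =>
    have hC : (n+1).choose 2 ≠ 1 := by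
      have := chooseG (n+1) 3 (by omega); simp [Nat.choose] at this ⊢; omega
    rw [step' (n+1) 1 (by omega) (by omega) hC]
    simp [Finset.sum_range_succ, A0, ih]

lemma A2 (n : ℕ) (h : 2 ≤ n) : A n 2 = (n : ℤ) - 2 := by
  induction n, h using Nat.le_induction with
  | base =>
    show (dq 2).coeff 2 = 0
    rw [show (2:ℕ) = 0+2 from rfl, dq]
    simp [dq, coeff_X_pow, coeff_X]
  | succ n hn ih =>
    have hC : (n+1).choose 2 ≠ 2 := by
      have := chooseG (n+1) 3 (by omega); simp [Nat.choose] at this ⊢; omega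
    rw [step' (n+1) 2 (by omega) (by omega) hC]
    simp [Finset.sum_range_succ, A0, ih, A1 n hn]
    push_cast; ring

lemma A3 (n : ℕ) (h : 3 ≤ n) : 2 * A n 3 = ((n:ℤ) - 1) * ((n:ℤ) - 2) - 2 := by
  induction n, h using Nat.le_induction with
  | base =>
    have hd2 : dq 2 = X := by
      rw [show (2:ℕ) = 0+2 from rfl, dq]; simp [dq]
    have hd3 : dq 3 = X + X^2 := by
      rw [show (3:ℕ) = 1+2 from rfl, dq, show (1:ℕ)+1 = 2 from rfl, hd2]
      simp [Finset.sum_range_succ, Nat.choose]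
      ring
    show 2 * (dq 3).coeff 3 = _
    rw [hd3]
    simp [coeff_X_pow, coeff_X]
  | succ n hn ih =>
    have hC : (n+1).choose 2 ≠ 3 := by
      have := chooseG (n+1) 4 (by omega); simp [Nat.choose] at this ⊢; omega
    rw [step' (n+1) 3 (by omega) (by omega) hC]
    have h1 := A1 n (by omega)
    have h2 := A2 n (by omega)
    simp [Finset.sum_range_succ, A0]
    push_cast
    ring_nf
    ring_nf at ih
    linarith

lemma A4 (n : ℕ) (h : 6 ≤ n) : 6 * A n 4 = ((n:ℤ) - 2) * ((n:ℤ) + 2) * ((n:ℤ) - 3) := by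
  induction n, h using Nat.le_induction with
  | base =>
    have hd2 : dq 2 = X := by
      rw [show (2:ℕ) = 0+2 from rfl, dq]; simp [dq]
    have hd3 : dq 3 = X + X^2 := by
      rw [show (3:ℕ) = 1+2 from rfl, dq, show (1:ℕ)+1 = 2 from rfl, hd2]
      simp [Finset.sum_range_succ, Nat.choose]
      ring
    have hd4 : dq 4 = X + C 2 * X^2 + C 2 * X^3 + C 2 * X^4 + X^5 + X^6 := by
      rw [show (4:ℕ) = 2+2 from rfl, dq, show (2:ℕ)+1 = 3 from rfl, hd3]
      simp [Finset.sum_range_succ, Nat.choose]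
      ring
    have a44 : A 4 4 = 2 := by
      show (dq 4).coeff 4 = 2
      rw [hd4]
      simp [coeff_X_pow, coeff_X]
    have a54 : A 5 4 = 7 := by
      rw [step' 5 4 (by omega) (by omega) (by decide)]
      have h3 := A3 4 (by omega)
      have h2 := A2 4 (by omega)
      have h1 := A1 4 (by omega)
      simp [Finset.sum_range_succ, A0] at *
      omega
    rw [step' 6 4 (by omega) (by omega) (by decide)]
    have h3 := A3 5 (by omega)
    have h2 := A2 5 (by omega)
    have h1 := A1 5 (by omega)
    simp [Finset.sum_range_succ, A0, a54] at *
    omega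
  | succ n hn ih =>
    have hC : (n+1).choose 2 ≠ 4 := by
      have := chooseG (n+1) 5 (by omega); simp [Nat.choose] at this ⊢; omega
    rw [step' (n+1) 4 (by omega) (by omega) hC]
    have h1 := A1 n (by omega)
    have h2 := A2 n (by omega)
    have h3 := A3 n (by omega)
    simp [Finset.sum_range_succ, A0]
    push_cast
    ring_nf
    ring_nf at ih h3
    linarith

theorem stmt_9 (m : ℕ) (hm : 6 ≤ m) (he : Even m) :
    (A m 4 : ℚ) = ((m : ℚ) - 2) * ((m : ℚ) + 2) * ((m : ℚ) - 3) / 6 := by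
  have h := A4 m hm
  have h' : ((6 * A m 4 : ℤ) : ℚ) = ((((m:ℤ) - 2) * ((m:ℤ) + 2) * ((m:ℤ) - 3) : ℤ) : ℚ) := by
    exact_mod_cast h
  push_cast at h'
  field_simp
  linarith
end

section
/- For even m ≥ 6, with β_m = binom(m,2), the coefficient of q^{β_m - 1} in d_m(q) equals m/2 - 1. -/
open Polynomial

lemma dq_key : ∀ n : ℕ, (dq (n+1)).natDegree ≤ (n+1).choose 2
    ∧ (dq (n+1)).coeff ((n+1).choose 2) = (if Even (n+1) then 1 else 0)
    ∧ (dq (n+1)).coeff ((n+1).choose 2 - 1) = ((n / 2 : ℕ) : ℤ) := by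
  intro n
  induction n with
  | zero => simp [dq]
  | succ k ih =>
    obtain ⟨hdeg, htop, hsub⟩ := ih
    have hc : (k + 2).choose 2 = (k + 1) + (k + 1).choose 2 := by
      rw [Nat.choose, Nat.choose_one_right]
    set c2 := (k + 1).choose 2 with hc2
    have hdq : dq (k + 2) = (∑ i ∈ Finset.range (k + 2), X ^ i) * dq (k + 1)
        + (-1) ^ (k + 2) * X ^ ((k + 2).choose 2) := by rw [dq]
    have hprod : ∀ d : ℕ, ((∑ i ∈ Finset.range (k + 2), X ^ i) * dq (k + 1)).coeff d
        = ∑ i ∈ Finset.range (k + 2), (if i ≤ d then (dq (k+1)).coeff (d - i) else 0) := by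
      intro d
      rw [Finset.sum_mul, finset_sum_coeff]
      refine Finset.sum_congr rfl fun i _ => ?_
      rw [mul_comm, coeff_mul_X_pow']
    have hvanish : ∀ j : ℕ, c2 < j → (dq (k+1)).coeff j = 0 := fun j hj =>
      coeff_eq_zero_of_natDegree_lt (lt_of_le_of_lt hdeg hj)
    have hsign : ∀ d : ℕ, ((-1 : Polynomial ℤ) ^ (k + 2) * X ^ ((k + 2).choose 2)).coeff d
        = if (k + 2).choose 2 = d then (-1 : ℤ) ^ (k + 2) else 0 := by
      intro d
      rw [show ((-1 : Polynomial ℤ) ^ (k+2)) = C ((-1 : ℤ)^(k+2)) by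
          rw [← C_1, ← C_neg, ← C_pow],
        coeff_C_mul, coeff_X_pow, mul_ite, mul_one, mul_zero]
      exact if_congr eq_comm rfl rfl
    show (dq (k+2)).natDegree ≤ (k+2).choose 2
        ∧ (dq (k+2)).coeff ((k+2).choose 2) = (if Even (k+2) then 1 else 0)
        ∧ (dq (k+2)).coeff ((k+2).choose 2 - 1) = (((k+1) / 2 : ℕ) : ℤ)
    refine ⟨?_, ?_, ?_⟩
    · rw [hdq]
      refine le_trans (natDegree_add_le _ _) (max_le ?_ ?_)
      · refine le_trans (natDegree_mul_le) ?_
        have h1 : (∑ i ∈ Finset.range (k + 2), X ^ i : Polynomial ℤ).natDegree ≤ k + 1 := by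
          refine natDegree_sum_le_of_forall_le _ _ fun i hi => ?_
          simp only [natDegree_X_pow]
          exact Nat.lt_succ_iff.mp (Finset.mem_range.mp hi)
        omega
      · calc ((-1 : Polynomial ℤ) ^ (k + 2) * X ^ ((k + 2).choose 2)).natDegree
            ≤ ((-1 : Polynomial ℤ) ^ (k+2)).natDegree
              + (X ^ ((k + 2).choose 2) : Polynomial ℤ).natDegree := natDegree_mul_le
          _ ≤ (k+2).choose 2 := by
              rw [show ((-1 : Polynomial ℤ) ^ (k+2)) = C ((-1 : ℤ)^(k+2)) by
                  rw [← C_1, ← C_neg, ← C_pow],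
                natDegree_C, natDegree_X_pow]
              omega
    · rw [hdq, coeff_add, hprod, hsign, Finset.sum_range_succ]
      have h1 : ∑ i ∈ Finset.range (k + 1),
          (if i ≤ (k + 2).choose 2 then (dq (k+1)).coeff ((k + 2).choose 2 - i) else 0) = 0 := by
        refine Finset.sum_eq_zero fun i hi => ?_
        have hi' := Finset.mem_range.mp hi
        split
        · exact hvanish _ (by omega)
        · rfl
      rw [h1, if_pos (show k + 1 ≤ (k + 2).choose 2 by omega),
        show (k + 2).choose 2 - (k+1) = c2 by omega, htop, if_pos rfl, zero_add]
      rcases Nat.even_or_odd k with h | h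
      · have h2 : Even (k+2) := h.add even_two
        have h1 : ¬ Even (k+1) := by simp [Nat.even_add_one, h]
        rw [if_neg h1, if_pos h2, h2.neg_one_pow]; ring
      · have h2 : Odd (k+2) := h.add_even even_two
        have h1 : Even (k+1) := h.add_one
        rw [if_pos h1, if_neg (Nat.not_even_iff_odd.mpr h2), h2.neg_one_pow]; ring
    · rcases Nat.eq_zero_or_pos k with rfl | hk
      · rw [hdq]
        norm_num [dq]
      · have hc2pos : 1 ≤ c2 := Nat.choose_pos (by omega)
        rw [hdq, coeff_add, hprod, hsign, Finset.sum_range_succ, Finset.sum_range_succ]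
        have h1 : ∑ i ∈ Finset.range k,
            (if i ≤ (k + 2).choose 2 - 1 then (dq (k+1)).coeff ((k + 2).choose 2 - 1 - i) else 0)
            = 0 := by
          refine Finset.sum_eq_zero fun i hi => ?_
          have hi' := Finset.mem_range.mp hi
          split
          · exact hvanish _ (by omega)
          · rfl
        rw [h1, if_pos (show k ≤ (k + 2).choose 2 - 1 by omega),
          if_pos (show k + 1 ≤ (k + 2).choose 2 - 1 by omega),
          show (k + 2).choose 2 - 1 - k = c2 by omega,
          show (k + 2).choose 2 - 1 - (k+1) = c2 - 1 by omega, htop, hsub,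
          if_neg (show ¬ ((k + 2).choose 2 = (k + 2).choose 2 - 1) by omega)]
        rcases Nat.even_or_odd (k+1) with h | h
        · rw [if_pos h]
          have := Nat.even_iff.mp h
          omega
        · rw [if_neg (Nat.not_even_iff_odd.mpr h)]
          have := Nat.odd_iff.mp h
          omega

theorem stmt_10 (m : ℕ) (hm : 6 ≤ m) (he : Even m) :
    (A m (m.choose 2 - 1) : ℚ) = (m : ℚ) / 2 - 1 := by
  obtain ⟨k, hk⟩ := he
  have hk3 : 3 ≤ k := by omega
  have h := (dq_key (m - 1)).2.2
  rw [show m - 1 + 1 = m by omega] at h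
  have hA : A m (m.choose 2 - 1) = (((m - 1) / 2 : ℕ) : ℤ) := h
  rw [hA]
  have : (m - 1) / 2 = k - 1 := by omega
  rw [this]
  have : ((k - 1 : ℕ) : ℚ) = (k : ℚ) - 1 := by
    push_cast [Nat.cast_sub (by omega : 1 ≤ k)]; ring
  push_cast
  rw [this]
  subst hk
  push_cast
  ring
end

section
/- For n ≥ 6 with n ≡ 0 (mod 4), writing d_n(q) = ∑_{k=1}^{β_n} A_n(k) q^k with β_n = binom(n,2) and r = n(n-1)/4, the sequence A_n(k)/A_n(β_n - k) for k = 1, ..., r-1 is strictly increasing, and A_n(r-1)/A_n(r+1) < 1. -/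
open Polynomial

noncomputable def aZ (n : ℕ) (k : ℤ) : ℤ := if 0 ≤ k then (dq n).coeff k.toNat else 0

noncomputable def bZ (n : ℕ) (k : ℤ) : ℤ := aZ n ((n.choose 2 : ℤ) - k)

noncomputable def dZ (n : ℕ) (s t : ℤ) : ℤ := aZ n s * bZ n t - aZ n t * bZ n s

lemma aZ_neg {n : ℕ} {k : ℤ} (h : k < 0) : aZ n k = 0 := by
  simp [aZ, not_le.mpr h]

lemma A_eq_aZ (n k : ℕ) : A n k = aZ n (k : ℤ) := by
  simp [A, aZ]

lemma choose2_cast_pos (n : ℕ) (h : 2 ≤ n) : (1 : ℤ) ≤ (n.choose 2 : ℤ) := by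
  have : 0 < n.choose 2 := Nat.choose_pos h
  exact_mod_cast this

lemma choose2_succ (n : ℕ) : ((n+1).choose 2 : ℤ) = (n.choose 2 : ℤ) + n := by
  have : (n+1).choose 2 = n.choose 1 + n.choose 2 := Nat.choose_succ_succ n 1
  rw [this, Nat.choose_one_right]
  push_cast; ring

lemma choose2_ge (n : ℕ) (h : 5 ≤ n) : (2 * n : ℤ) ≤ (n.choose 2 : ℤ) := by
  have h1 : n.choose 2 = n * (n-1) / 2 := Nat.choose_two_right n
  have h2 : 2 * n * 2 ≤ n * (n - 1) := by nlinarith [Nat.sub_le n 1, Nat.le_sub_one_of_lt (show 4 < n by omega)]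
  have : 2 * n ≤ n * (n-1) / 2 := (Nat.le_div_iff_mul_le (by norm_num)).mpr h2
  rw [h1]; exact_mod_cast this

lemma aZ_rec (m : ℕ) (k : ℤ) :
    aZ (m + 2) k = (∑ i ∈ Finset.range (m + 2), aZ (m + 1) (k - i))
      + (if k = ((m+2).choose 2 : ℤ) then (-1 : ℤ)^(m+2) else 0) := by
  by_cases hk : 0 ≤ k
  · have hs : aZ (m+2) k = (dq (m+2)).coeff k.toNat := by simp [aZ, hk]
    rw [hs]
    show (((∑ i ∈ Finset.range (m + 2), X ^ i) * dq (m + 1)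
        + (-1) ^ (m + 2) * X ^ ((m + 2).choose 2)) : Polynomial ℤ).coeff k.toNat = _
    rw [coeff_add]
    congr 1
    · rw [Finset.sum_mul, finset_sum_coeff]
      apply Finset.sum_congr rfl
      intro i hi
      rw [mul_comm (X ^ i), Polynomial.coeff_mul_X_pow']
      by_cases hik : (i : ℤ) ≤ k
      · have h1 : i ≤ k.toNat := by omega
        have h2 : 0 ≤ k - i := by omega
        rw [if_pos h1]
        simp only [aZ, if_pos h2]
        congr 1
        omega
      · have h1 : ¬ (i ≤ k.toNat) := by omega
        rw [if_neg h1, aZ_neg (by omega)]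
    · have : ((-1 : Polynomial ℤ)) ^ (m+2) = C ((-1 : ℤ)^(m+2)) := by
        rw [map_pow, map_neg, map_one]
      rw [this, coeff_C_mul, coeff_X_pow]
      by_cases he : k = ((m+2).choose 2 : ℤ)
      · rw [if_pos he, if_pos (by omega)]
        ring
      · rw [if_neg he, if_neg (by omega)]
        ring
  · push_neg at hk
    rw [aZ_neg hk, if_neg (by have := choose2_cast_pos (m+2) (by omega); omega)]
    rw [Finset.sum_eq_zero, add_zero]
    intro i hi
    exact aZ_neg (by omega)

lemma sum_window (f : ℤ → ℤ) (N : ℕ) (k : ℤ) :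
    ∑ i ∈ Finset.range N, f (k - i) = ∑ s ∈ Finset.Ico (k - N + 1) (k + 1), f s := by
  refine Finset.sum_nbij' (fun i => k - i) (fun s => (k - s).toNat) ?_ ?_ ?_ ?_ ?_
  · intro i hi; simp only [Finset.mem_range] at hi; simp only [Finset.mem_Ico]; omega
  · intro s hs; simp only [Finset.mem_Ico] at hs; simp only [Finset.mem_range]; omega
  · intro i hi; simp only [Finset.mem_range] at hi; omega
  · intro s hs; simp only [Finset.mem_Ico] at hs; omega
  · intro i hi; rfl

lemma sum_reflect (f : ℤ → ℤ) (c x y : ℤ) :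
    ∑ s ∈ Finset.Ico x (y+1), f s = ∑ t ∈ Finset.Ico (c - y) (c - x + 1), f (c - t) := by
  refine Finset.sum_nbij' (fun s => c - s) (fun t => c - t) ?_ ?_ ?_ ?_ ?_
  · intro s hs; simp only [Finset.mem_Ico] at *; omega
  · intro t ht; simp only [Finset.mem_Ico] at *; omega
  · intro s hs; omega
  · intro t ht; omega
  · intro s hs; congr 1; omega

lemma aZ_window (n : ℕ) (hn : 1 ≤ n) (k : ℤ) :
    aZ (n+1) k = (∑ s ∈ Finset.Ico (k - n) (k+1), aZ n s)
      + (if k = ((n+1).choose 2 : ℤ) then (-1:ℤ)^(n+1) else 0) := by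
  obtain ⟨m, rfl⟩ : ∃ m, n = m+1 := ⟨n-1, by omega⟩
  rw [show m + 1 + 1 = m + 2 from rfl, aZ_rec m k, sum_window (aZ (m+1)) (m+2) k]
  have h : k - ((m+2 : ℕ) : ℤ) + 1 = k - ((m+1 : ℕ) : ℤ) := by push_cast; ring
  rw [h]

structure Qinv (n : ℕ) : Prop where
  pos : ∀ k : ℤ, 0 ≤ aZ n k
  pos' : ∀ k : ℤ, 1 ≤ k → k ≤ (n.choose 2 : ℤ) - 1 → 0 < aZ n k
  zlow : ∀ k : ℤ, k ≤ 0 → aZ n k = 0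
  zhigh : ∀ k : ℤ, (n.choose 2 : ℤ) + 1 ≤ k → aZ n k = 0
  top : aZ n (n.choose 2 : ℤ) = if n % 2 = 0 then 1 else 0
  dpos : ∀ s t : ℤ, 1 ≤ t → t < s → s ≤ (n.choose 2 : ℤ) - 1 → 0 < dZ n s t

lemma Qinv.dnn {n : ℕ} (I : Qinv n) : ∀ s t : ℤ, t < s → 0 ≤ dZ n s t := by
  intro s t hts
  rcases lt_trichotomy t 0 with ht | ht | ht
  · have h1 : aZ n t = 0 := I.zlow t (by omega)
    have h2 : bZ n t = 0 := I.zhigh _ (by omega)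
    simp [dZ, h1, h2]
  · subst ht
    have h1 : aZ n (0:ℤ) = 0 := I.zlow 0 le_rfl
    simp [dZ, h1]
    exact mul_nonneg (I.pos _) (I.pos _)
  · rcases lt_trichotomy s (n.choose 2 : ℤ) with hs | hs | hs
    · exact le_of_lt (I.dpos s t (by omega) hts (by omega))
    · have h2 : bZ n s = 0 := by
        simp only [bZ, hs, sub_self]; exact I.zlow 0 le_rfl
      simp [dZ, h2]
      exact mul_nonneg (I.pos _) (I.pos _)
    · have h1 : aZ n s = 0 := I.zhigh s (by omega)
      have h2 : bZ n s = 0 := by simp only [bZ]; exact aZ_neg (by omega)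
      simp [dZ, h1, h2]

lemma qinv_step (n : ℕ) (hn : 5 ≤ n) (I : Qinv n) : Qinv (n+1) := by
  set c : ℤ := (n.choose 2 : ℤ) with hcdef
  have hC : ((n+1).choose 2 : ℤ) = c + n := choose2_succ n
  have hc2 : (2 * n : ℤ) ≤ c := choose2_ge n hn
  have hn' : (5 : ℤ) ≤ (n : ℤ) := by exact_mod_cast hn
  have hw : ∀ k : ℤ, k ≠ c + n → aZ (n+1) k = ∑ s ∈ Finset.Ico (k - n) (k+1), aZ n s := by
    intro k hk
    rw [aZ_window n (by omega) k, hC, if_neg hk, add_zero]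
  have zlow : ∀ k : ℤ, k ≤ 0 → aZ (n+1) k = 0 := by
    intro k hk
    rw [hw k (by omega)]
    exact Finset.sum_eq_zero fun s hs => I.zlow s (by simp only [Finset.mem_Ico] at hs; omega)
  have zhigh : ∀ k : ℤ, ((n+1).choose 2 : ℤ) + 1 ≤ k → aZ (n+1) k = 0 := by
    intro k hk
    rw [hC] at hk
    rw [hw k (by omega)]
    exact Finset.sum_eq_zero fun s hs => I.zhigh s (by simp only [Finset.mem_Ico] at hs; omega)
  have top : aZ (n+1) ((n+1).choose 2 : ℤ) = if (n+1) % 2 = 0 then 1 else 0 := by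
    rw [aZ_window n (by omega), if_pos rfl, hC]
    have hsum : (∑ s ∈ Finset.Ico (c + n - n) (c + n + 1), aZ n s) = aZ n c := by
      refine Finset.sum_eq_single_of_mem c (by simp only [Finset.mem_Ico]; omega) ?_
      intro s hs hne
      simp only [Finset.mem_Ico] at hs
      exact I.zhigh s (by omega)
    rw [hsum, I.top]
    rcases Nat.even_or_odd n with he | ho
    · have h1 : n % 2 = 0 := Nat.even_iff.mp he
      have h2 : (n+1) % 2 = 1 := by omega
      have h3 : Odd (n+1) := Nat.odd_iff.mpr h2
      rw [if_pos h1, if_neg (by omega), h3.neg_one_pow]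
      ring
    · have h1 : n % 2 = 1 := Nat.odd_iff.mp ho
      have h2 : (n+1) % 2 = 0 := by omega
      have h3 : Even (n+1) := Nat.even_iff.mpr h2
      rw [if_neg (by omega), if_pos h2, h3.neg_one_pow]
      ring
  have pos : ∀ k : ℤ, 0 ≤ aZ (n+1) k := by
    intro k
    by_cases hk : k = c + n
    · rw [hk, show c + n = ((n+1).choose 2 : ℤ) from hC.symm, top]
      split_ifs <;> norm_num
    · rw [hw k hk]
      exact Finset.sum_nonneg fun s _ => I.pos s
  have pos' : ∀ k : ℤ, 1 ≤ k → k ≤ ((n+1).choose 2 : ℤ) - 1 → 0 < aZ (n+1) k := by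
    intro k hk1 hk2
    rw [hC] at hk2
    rw [hw k (by omega)]
    have hj1 : (1:ℤ) ≤ min k (c-1) := by omega
    have hj2 : min k (c-1) ≤ c - 1 := by omega
    calc (0:ℤ) < aZ n (min k (c-1)) := I.pos' _ hj1 hj2
      _ ≤ _ := Finset.single_le_sum (fun i _ => I.pos i)
          (by simp only [Finset.mem_Ico]; omega)
  refine ⟨pos, pos', zlow, zhigh, top, ?_⟩
  -- dpos
  intro p q hq hqp hp
  rw [hC] at hp
  have hA : aZ (n+1) p = ∑ s ∈ Finset.Ico (p - n) (p+1), aZ n s := hw p (by omega)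
  have hA' : aZ (n+1) q = ∑ s ∈ Finset.Ico (q - n) (q+1), aZ n s := hw q (by omega)
  have hBgen : ∀ x : ℤ, 1 ≤ x → x ≤ c + n - 1 →
      bZ (n+1) x = ∑ t ∈ Finset.Ico (x - n) (x+1), bZ n t := by
    intro x hx1 hx2
    have h1 : bZ (n+1) x = aZ (n+1) (c + n - x) := by simp only [bZ, hC]
    rw [h1, hw _ (by omega)]
    have h2 : c + n - x + 1 = (c + n - x) + 1 := rfl
    have := sum_reflect (aZ n) c (c + n - x - n) (c + n - x)
    rw [this]
    have e1 : c - (c + n - x) = x - n := by ring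
    have e2 : c - (c + n - x - n) + 1 = x + 1 := by ring
    rw [e1, e2]
    exact Finset.sum_congr rfl fun t _ => by simp only [bZ, hcdef]
  have hB : bZ (n+1) q = ∑ t ∈ Finset.Ico (q - n) (q+1), bZ n t := hBgen q hq (by omega)
  have hB' : bZ (n+1) p = ∑ t ∈ Finset.Ico (p - n) (p+1), bZ n t := hBgen p (by omega) (by omega)
  have expand : ∀ U V : Finset ℤ, (∑ s ∈ U, ∑ t ∈ V, dZ n s t)
      = (∑ s ∈ U, aZ n s) * (∑ t ∈ V, bZ n t) - (∑ t ∈ V, aZ n t) * (∑ s ∈ U, bZ n s) := by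
    intro U V
    have h1 : ∀ s : ℤ, (∑ t ∈ V, dZ n s t)
        = aZ n s * (∑ t ∈ V, bZ n t) - (∑ t ∈ V, aZ n t) * bZ n s := by
      intro s
      simp only [dZ]
      rw [Finset.sum_sub_distrib, ← Finset.mul_sum, ← Finset.sum_mul]
    simp only [h1]
    rw [Finset.sum_sub_distrib, ← Finset.sum_mul, ← Finset.mul_sum]
  set P := Finset.Ico (p - n) (p+1) with hP
  set Q := Finset.Ico (q - n) (q+1) with hQ
  set O := Finset.Ico (p - n) (q+1) with hO
  have hOsub : O ×ˢ O ⊆ P ×ˢ Q :=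
    Finset.product_subset_product (Finset.Ico_subset_Ico le_rfl (by omega))
      (Finset.Ico_subset_Ico (by omega) le_rfl)
  have hOzero : ∑ x ∈ O ×ˢ O, dZ n x.1 x.2 = 0 := by
    rw [Finset.sum_product, expand O O]
    ring
  have hkey : dZ (n+1) p q = ∑ x ∈ (P ×ˢ Q) \ (O ×ˢ O), dZ n x.1 x.2 := by
    have h1 : dZ (n+1) p q = ∑ x ∈ P ×ˢ Q, dZ n x.1 x.2 := by
      rw [Finset.sum_product, expand P Q]
      simp only [dZ]
      rw [hA, hA', hB, hB']
    rw [h1, ← Finset.sum_sdiff hOsub, hOzero, add_zero]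
  have hnonneg : ∀ x ∈ (P ×ˢ Q) \ (O ×ˢ O), 0 ≤ dZ n x.1 x.2 := by
    intro x hx
    simp only [Finset.mem_sdiff, Finset.mem_product, Finset.mem_Ico, hP, hQ, hO] at hx
    exact I.dnn x.1 x.2 (by omega)
  have hwitness : ∃ w : ℤ × ℤ, w ∈ (P ×ˢ Q) \ (O ×ˢ O) ∧ 0 < dZ n w.1 w.2 := by
    by_cases hp1 : p ≤ c - 1
    · refine ⟨(p, q), ?_, I.dpos p q hq hqp (by omega)⟩
      simp only [Finset.mem_sdiff, Finset.mem_product, Finset.mem_Ico, hP, hQ, hO]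
      omega
    · by_cases hq1 : q ≤ c - 2
      · refine ⟨(c - 1, q), ?_, I.dpos (c-1) q hq (by omega) (by omega)⟩
        simp only [Finset.mem_sdiff, Finset.mem_product, Finset.mem_Ico, hP, hQ, hO]
        omega
      · refine ⟨(c - 1, p - n - 1), ?_, I.dpos (c-1) (p-n-1) (by omega) (by omega) (by omega)⟩
        simp only [Finset.mem_sdiff, Finset.mem_product, Finset.mem_Ico, hP, hQ, hO]
        omega
  obtain ⟨w, hwmem, hwpos⟩ := hwitness
  rw [hkey]
  calc (0:ℤ) < dZ n w.1 w.2 := hwpos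
    _ ≤ _ := Finset.single_le_sum hnonneg hwmem

lemma aZ1 (k : ℤ) : aZ 1 k = 0 := by simp [aZ, dq]

lemma aZ2 (k : ℤ) : aZ 2 k = if k = 1 then 1 else 0 := by
  have h := aZ_rec 0 k
  norm_num [aZ1] at h
  convert h using 2 <;> norm_num [Nat.choose]

lemma aZ3 (k : ℤ) : aZ 3 k = if k = 1 ∨ k = 2 then 1 else 0 := by
  have h := aZ_rec 1 k
  rw [show (1+2 : ℕ) = 3 from rfl, show (1+1 : ℕ) = 2 from rfl] at h
  rw [h, Finset.sum_range_succ, Finset.sum_range_succ, Finset.sum_range_one]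
  simp only [aZ2]
  norm_num [Nat.choose]
  omega

lemma aZ4 (k : ℤ) : aZ 4 k = if k = 1 then 1 else if 2 ≤ k ∧ k ≤ 4 then 2
    else if k = 5 ∨ k = 6 then 1 else 0 := by
  have h := aZ_rec 2 k
  rw [show (2+2 : ℕ) = 4 from rfl, show (2+1 : ℕ) = 3 from rfl] at h
  rw [h, Finset.sum_range_succ, Finset.sum_range_succ, Finset.sum_range_succ,
    Finset.sum_range_one]
  simp only [aZ3]
  norm_num [Nat.choose]
  omega

lemma aZ5 (k : ℤ) : aZ 5 k = if k = 1 then 1 else if k = 2 then 3 else if k = 3 then 5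
    else if k = 4 then 7 else if k = 5 ∨ k = 6 then 8 else if k = 7 then 6
    else if k = 8 then 4 else if k = 9 then 2 else 0 := by
  have h := aZ_rec 3 k
  rw [show (3+2 : ℕ) = 5 from rfl, show (3+1 : ℕ) = 4 from rfl] at h
  rw [h, Finset.sum_range_succ, Finset.sum_range_succ, Finset.sum_range_succ,
    Finset.sum_range_succ, Finset.sum_range_one]
  simp only [aZ4]
  norm_num [Nat.choose]
  omega

lemma qinv5 : Qinv 5 := by
  have hch : ((5:ℕ).choose 2 : ℤ) = 10 := by norm_num [Nat.choose]
  refine ⟨?_, ?_, ?_, ?_, ?_, ?_⟩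
  · intro k; rw [aZ5]; split_ifs <;> norm_num
  · intro k hk1 hk2; rw [hch] at hk2; rw [aZ5]; omega
  · intro k hk; rw [aZ5]; omega
  · intro k hk; rw [hch] at hk; rw [aZ5]; omega
  · rw [hch, aZ5]; norm_num
  · intro s t ht hts hs
    rw [hch] at hs
    simp only [dZ, bZ, hch]
    have hs1 : 2 ≤ s := by omega
    have hs2 : s ≤ 9 := by omega
    interval_cases s <;> interval_cases t <;> norm_num [aZ5]

lemma qinv_all (n : ℕ) (hn : 5 ≤ n) : Qinv n := by
  induction n, hn using Nat.le_induction with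
  | base => exact qinv5
  | succ n hn ih => exact qinv_step n hn ih

theorem stmt_16 (n : ℕ) (hn : 6 ≤ n) (hmod : n % 4 = 0) :
    (∀ k, 1 ≤ k → k + 1 ≤ n * (n - 1) / 4 - 1 →
      (A n k : ℚ) / (A n (n.choose 2 - k) : ℚ) <
        (A n (k + 1) : ℚ) / (A n (n.choose 2 - (k + 1)) : ℚ)) ∧
    (A n (n * (n - 1) / 4 - 1) : ℚ) / (A n (n * (n - 1) / 4 + 1) : ℚ) < 1 := by
  obtain ⟨m, rfl⟩ : ∃ m, n = 4 * m := ⟨n / 4, by omega⟩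
  have hm : 2 ≤ m := by omega
  set n := 4 * m with hndef
  have hn8 : 8 ≤ n := by omega
  have I : Qinv n := qinv_all n (by omega)
  have hr : n * (n - 1) / 4 = m * (n - 1) := by
    rw [show n * (n-1) = 4 * (m * (n-1)) by rw [hndef]; ring]
    exact Nat.mul_div_cancel_left _ (by norm_num)
  have hχ : n.choose 2 = 2 * (m * (n - 1)) := by
    rw [Nat.choose_two_right]
    rw [show n * (n-1) = 2 * (2 * (m * (n-1))) by rw [hndef]; ring]
    exact Nat.mul_div_cancel_left _ (by norm_num)
  set r : ℕ := m * (n - 1) with hrdef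
  have hr14 : 14 ≤ r := by
    have : 2 * 7 ≤ m * (n - 1) := Nat.mul_le_mul hm (by omega)
    omega
  have hχr : n.choose 2 = 2 * r := hχ
  -- ℤ versions
  have hcz : ((n.choose 2 : ℕ) : ℤ) = 2 * (r : ℤ) := by exact_mod_cast congrArg (Nat.cast : ℕ → ℤ) hχr
  constructor
  · intro k hk1 hk2
    have hk2' : k + 2 ≤ r := by omega
    -- positivity of denominators
    have hd1 : 0 < A n (n.choose 2 - k) := by
      rw [A_eq_aZ]
      apply I.pos' <;> push_cast [Nat.cast_sub (show k ≤ n.choose 2 by omega)] <;> omega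
    have hd2 : 0 < A n (n.choose 2 - (k + 1)) := by
      rw [A_eq_aZ]
      apply I.pos' <;> push_cast [Nat.cast_sub (show k + 1 ≤ n.choose 2 by omega)] <;> omega
    rw [div_lt_div_iff₀ (by exact_mod_cast hd1) (by exact_mod_cast hd2)]
    have main : A n k * A n (n.choose 2 - (k+1)) < A n (k+1) * A n (n.choose 2 - k) := by
      have hd := I.dpos ((k:ℤ)+1) (k:ℤ) (by exact_mod_cast hk1) (by omega)
        (by rw [hcz]; push_cast; omega)
      simp only [dZ, bZ] at hd
      rw [A_eq_aZ, A_eq_aZ, A_eq_aZ, A_eq_aZ]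
      push_cast [Nat.cast_sub (show k + 1 ≤ n.choose 2 by omega),
        Nat.cast_sub (show k ≤ n.choose 2 by omega)]
      have e1 : ((k:ℤ)) + 1 = ((k+1 : ℕ) : ℤ) := by push_cast; ring
      nlinarith [hd]
    exact_mod_cast main
  · rw [hr]
    have hd2 : 0 < A n (r + 1) := by
      rw [A_eq_aZ]
      apply I.pos' <;> push_cast <;> omega
    rw [div_lt_one (by exact_mod_cast hd2)]
    have main : A n (r - 1) < A n (r + 1) := by
      have hd := I.dpos (r : ℤ) ((r:ℤ) - 1) (by omega) (by omega) (by rw [hcz]; omega)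
      simp only [dZ, bZ, hcz] at hd
      have e1 : 2 * (r:ℤ) - ((r:ℤ) - 1) = (r:ℤ) + 1 := by ring
      have e2 : 2 * (r:ℤ) - (r:ℤ) = (r:ℤ) := by ring
      rw [e1, e2] at hd
      -- hd : 0 < aZ n r * aZ n (r+1) - aZ n (r-1) * aZ n r
      have har : 0 < aZ n (r:ℤ) := I.pos' _ (by omega) (by rw [hcz]; omega)
      have : aZ n ((r:ℤ) - 1) < aZ n ((r:ℤ)+1) := by nlinarith [hd, har]
      rw [A_eq_aZ, A_eq_aZ]
      push_cast [Nat.cast_sub (show 1 ≤ r by omega)]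
      exact this
    exact_mod_cast main
end
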